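/- Let ξ(0), ξ(−1), ξ(−2), ... be i.i.d. nonnegative integer random variables with ℙ(ξ > m) = (1−p_1)⋯(1−p_m), and define ν = inf{n ≥ 1 : ξ(0) ≤ n, ξ(−1) ≤ n−1, ..., ξ(−(n−1)) ≤ 1}. If 𝔼[ξ^r] < ∞ for some r ≥ 1, then 𝔼[ν^r] < ∞. -/

import Mathlib

open MeasureTheory ProbabilityTheory Filter

/-- Configuration: edge indicators. -/
abbrev Cfg := ℤ → ℤ → Bool

/-- There is an edge from `i` to `j`. -/
def Edge (ω : Cfg) (i j : ℤ) : Prop := i < j ∧ ω i j = true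

/-- There is a directed path from `i` to `j`. -/
def Leads (ω : Cfg) : ℤ → ℤ → Prop := Relation.TransGen (Edge ω)

/-- A list of vertices forming a path inside `{a,...,b}`. -/
def IsPathIn (ω : Cfg) (a b : ℤ) (l : List ℤ) : Prop :=
  l ≠ [] ∧ l.Chain' (Edge ω) ∧ ∀ x ∈ l, a ≤ x ∧ x ≤ b

/-- `L ω a b`: maximal number of edges of a path contained in `{a,...,b}`. -/
noncomputable def L (ω : Cfg) (a b : ℤ) : ℕ :=
  sSup {n | ∃ l : List ℤ, IsPathIn ω a b l ∧ l.length = n + 1}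

/-- `T ω i j`: maximal number of edges of a path from `i` to `j` (0 if none). -/
noncomputable def T (ω : Cfg) (i j : ℤ) : ℕ :=
  sSup {n | ∃ l : List ℤ, l.Chain' (Edge ω) ∧ l.head? = some i ∧
    l.getLast? = some j ∧ l.length = n + 1}

/-- The skeleton of the graph. -/
def Skel (ω : Cfg) : Set ℤ :=
  {n | (∀ j, n < j → Leads ω n j) ∧ (∀ j, j < n → Leads ω j n)}

/-- The model hypotheses: independent edges, edge `(i,j)` present w.p. `p (j-i)`. -/
def GraphModel (p : ℕ → ℝ) (μ : Measure Cfg) : Prop :=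
  IsProbabilityMeasure μ ∧
  iIndepFun (β := fun _ : ℤ × ℤ => Bool)
    (fun (e : ℤ × ℤ) (ω : Cfg) => ω e.1 e.2) μ ∧
  (∀ i j : ℤ, i < j → μ {ω | ω i j = true} = ENNReal.ofReal (p (j - i).toNat)) ∧
  (∀ i j : ℤ, j ≤ i → μ {ω | ω i j = true} = 0)

/-- `ν = inf{n ≥ 1 : ξ(0) ≤ n, ξ(−1) ≤ n−1, ..., ξ(−(n−1)) ≤ 1}`, as an
`ℝ≥0∞`-valued random variable (`⊤` if no such `n` exists). -/
noncomputable def nuOf {Ω : Type*} (ξ : ℕ → Ω → ℕ) (ω : Ω) : ENNReal :=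
  sInf {x : ENNReal | ∃ n : ℕ, x = n ∧ 1 ≤ n ∧ ∀ k : ℕ, k < n → ξ k ω ≤ n - k}

namespace Stmt10Aux
open Finset
open scoped NNReal ENNReal


lemma rpow_sub_rpow_le {x y ρ : ℝ} (hy : 0 ≤ y) (hxy : y ≤ x) (hρ : 1 ≤ ρ) :
    x ^ ρ - y ^ ρ ≤ ρ * x ^ (ρ - 1) * (x - y) := by
  have hx : 0 ≤ x := hy.trans hxy
  rcases eq_or_lt_of_le hx with h0 | hxpos
  · have hx0 : x = 0 := h0.symm
    have hy0 : y = 0 := by linarith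
    simp [hx0, hy0, Real.zero_rpow (by linarith : ρ ≠ 0)]
  · have hu1 : y / x ≤ 1 := (div_le_one hxpos).2 hxy
    have hu0 : 0 ≤ y / x := div_nonneg hy hxpos.le
    have hb : 1 + ρ * (y / x - 1) ≤ (1 + (y / x - 1)) ^ ρ :=
      one_add_mul_self_le_rpow_one_add (by linarith) hρ
    rw [show (1 + (y / x - 1)) = y / x by ring] at hb
    have hxρ : (0:ℝ) < x ^ ρ := Real.rpow_pos_of_pos hxpos _
    have hmul : (y / x) ^ ρ * x ^ ρ = y ^ ρ := by
      rw [← Real.mul_rpow hu0 hxpos.le, div_mul_cancel₀ _ hxpos.ne']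
    have h2 : (1 + ρ * (y / x - 1)) * x ^ ρ ≤ y ^ ρ := by
      calc (1 + ρ * (y / x - 1)) * x ^ ρ ≤ (y / x) ^ ρ * x ^ ρ :=
            mul_le_mul_of_nonneg_right hb hxρ.le
        _ = y ^ ρ := hmul
    have hxρ1 : x ^ (ρ - 1) * x ^ (1:ℝ) = x ^ ρ := by
      rw [← Real.rpow_add hxpos]; norm_num
    rw [Real.rpow_one] at hxρ1
    have hxy' : x * (1 - y / x) = x - y := by field_simp
    calc x ^ ρ - y ^ ρ ≤ x ^ ρ - (1 + ρ * (y / x - 1)) * x ^ ρ := by linarith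
      _ = ρ * x ^ ρ * (1 - y / x) := by ring
      _ = ρ * (x ^ (ρ - 1) * (x * (1 - y / x))) := by rw [← hxρ1]; ring
      _ = ρ * x ^ (ρ - 1) * (x - y) := by rw [hxy']; ring

lemma rpow_add_le {a b ρ : ℝ} (ha : 0 ≤ a) (hb : 0 ≤ b) (h0 : 0 ≤ ρ) (h1 : ρ ≤ 1) :
    (a + b) ^ ρ ≤ a ^ ρ + b ^ ρ := by
  have key := NNReal.rpow_add_le_add_rpow (a.toNNReal) (b.toNNReal) h0 h1
  have h2 : ((a.toNNReal + b.toNNReal : ℝ≥0) : ℝ) = a + b := by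
    simp [Real.coe_toNNReal _ ha, Real.coe_toNNReal _ hb]
  have h3 : (((a.toNNReal + b.toNNReal : ℝ≥0) : ℝ)) ^ ρ
      ≤ ((a.toNNReal ^ ρ + b.toNNReal ^ ρ : ℝ≥0) : ℝ) := by
    rw [← NNReal.coe_rpow]
    exact_mod_cast key
  rw [h2] at h3
  refine h3.trans_eq ?_
  push_cast [NNReal.coe_rpow, Real.coe_toNNReal _ ha, Real.coe_toNNReal _ hb]
  ring

/-- Triangle swap, first form. -/
lemma swap1 (n : ℕ) (f : ℕ → ℕ → ℝ) :
    ∑ t ∈ Icc 1 n, ∑ m ∈ Icc 1 (n - t), f t m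
      = ∑ m ∈ Icc 1 n, ∑ t ∈ Icc 1 (n - m), f t m := by
  rw [Finset.sum_sigma', Finset.sum_sigma']
  refine Finset.sum_nbij' (fun x => ⟨x.2, x.1⟩) (fun x => ⟨x.2, x.1⟩) ?_ ?_ ?_ ?_ ?_
  · rintro ⟨t, m⟩ ha
    simp only [Finset.mem_sigma, Finset.mem_Icc] at *
    omega
  · rintro ⟨m, t⟩ ha
    simp only [Finset.mem_sigma, Finset.mem_Icc] at *
    omega
  · rintro ⟨t, m⟩ _; rfl
  · rintro ⟨m, t⟩ _; rfl
  · rintro ⟨t, m⟩ _; rfl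

/-- Triangle swap, second form. -/
lemma swap2 (N : ℕ) (f : ℕ → ℕ → ℝ) :
    ∑ n ∈ Icc 1 N, ∑ t ∈ Icc 1 n, f n t
      = ∑ t ∈ Icc 1 N, ∑ s ∈ range (N - t + 1), f (t + s) t := by
  rw [Finset.sum_sigma', Finset.sum_sigma']
  refine Finset.sum_nbij' (fun x => ⟨x.2, x.1 - x.2⟩) (fun x => ⟨x.1 + x.2, x.1⟩) ?_ ?_ ?_ ?_ ?_
  · rintro ⟨n, t⟩ ha
    simp only [Finset.mem_sigma, Finset.mem_Icc, Finset.mem_range] at *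
    omega
  · rintro ⟨t, s⟩ ha
    simp only [Finset.mem_sigma, Finset.mem_Icc, Finset.mem_range] at *
    omega
  · rintro ⟨n, t⟩ ha
    simp only [Finset.mem_sigma, Finset.mem_Icc, Finset.mem_range] at ha
    have : t + (n - t) = n := by omega
    simp [this]
  · rintro ⟨t, s⟩ ha
    simp only [Finset.mem_sigma, Finset.mem_Icc, Finset.mem_range] at ha
    have : t + s - t = s := by omega
    simp [this]
  · rintro ⟨n, t⟩ ha
    simp only [Finset.mem_sigma, Finset.mem_Icc, Finset.mem_range] at ha
    have : t + (n - t) = n := by omega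
    simp [this]

/-- The convolution identity: from the renewal equation for `z` derive one for `v`. -/
lemma conv_identity (z a v : ℕ → ℝ) (hz0 : z 0 = 1)
    (hR : ∀ n, 1 ≤ n → z n = ∑ m ∈ Icc 1 n, a m * z (n - m))
    (hv : ∀ n, v n = 1 - ∑ m ∈ Icc 1 n, a m) :
    ∀ n, 1 ≤ n → v n = ∑ t ∈ Icc 1 n, (z (t - 1) - z t) * v (n - t) := by
  intro n hn
  have tel : ∀ m : ℕ, ∑ t ∈ Icc 1 m, (z (t - 1) - z t) = 1 - z m := by
    intro m
    have h1 : ∑ t ∈ Icc 1 m, (z (t - 1) - z t) = ∑ i ∈ range m, (z i - z (i + 1)) := by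
      rw [← Finset.Ico_add_one_right_eq_Icc, Finset.sum_Ico_eq_sum_range]
      refine Finset.sum_congr (by simp) fun i _ => ?_
      congr 1
      · congr 1; omega
      · congr 1; omega
    rw [h1, Finset.sum_range_sub' z, hz0]
  have expand : ∑ t ∈ Icc 1 n, (z (t - 1) - z t) * v (n - t)
      = ∑ t ∈ Icc 1 n, (z (t - 1) - z t)
        - ∑ t ∈ Icc 1 n, ∑ m ∈ Icc 1 (n - t), (z (t - 1) - z t) * a m := by
    rw [← Finset.sum_sub_distrib]
    refine Finset.sum_congr rfl fun t _ => ?_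
    rw [hv (n - t), ← Finset.mul_sum]
    ring
  rw [expand, tel, swap1 n (fun t m => (z (t - 1) - z t) * a m)]
  have inner : ∀ m ∈ Icc 1 n, ∑ t ∈ Icc 1 (n - m), (z (t - 1) - z t) * a m
      = a m * (1 - z (n - m)) := by
    intro m _
    rw [← Finset.sum_mul, tel]
    ring
  rw [Finset.sum_congr rfl inner]
  have split : ∑ m ∈ Icc 1 n, a m * (1 - z (n - m))
      = ∑ m ∈ Icc 1 n, a m - ∑ m ∈ Icc 1 n, a m * z (n - m) := by
    rw [← Finset.sum_sub_distrib]
    exact Finset.sum_congr rfl fun m _ => by ring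
  rw [split, ← hR n hn, hv n]
  ring

section Moment

variable (v b : ℕ → ℝ)

/-- Core Gronwall-type estimate. -/
lemma core (hv0 : v 0 = 1) (hvnn : ∀ n, 0 ≤ v n) (hbnn : ∀ t, 0 ≤ b t)
    (hrec : ∀ n, 1 ≤ n → v n = ∑ t ∈ Icc 1 n, b t * v (n - t))
    {c M : ℝ} (hc : 0 < c) (hbsum : ∀ N : ℕ, ∑ t ∈ Icc 1 N, b t ≤ 1 - c)
    (ρ ρ' K C' : ℝ) (hρ : 0 ≤ ρ) (hK : 0 ≤ K) (hC' : 0 ≤ C') (hM : 0 ≤ M)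
    (hMb : ∀ N : ℕ, ∑ t ∈ Icc 1 N, ((t:ℝ)+1) ^ ρ * b t ≤ M)
    (hw : ∀ t s : ℕ, (((t + s : ℕ):ℝ)+1) ^ ρ ≤ ((s:ℝ)+1) ^ ρ + K * ((t:ℝ)+1) ^ ρ * ((s:ℝ)+1) ^ ρ')
    (hrem : ∀ N t : ℕ, 1 ≤ t → t ≤ N →
      K * (∑ s ∈ range (N - t + 1), ((s:ℝ)+1) ^ ρ' * v s) ≤ K * C') :
    ∀ N : ℕ, ∑ n ∈ range (N+1), ((n:ℝ)+1) ^ ρ * v n ≤ (1 + K * C' * M) / c := by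
  intro N
  set w : ℕ → ℝ := fun n => ((n:ℝ)+1) ^ ρ with hwdef
  have hwnn : ∀ n, 0 ≤ w n := fun n => Real.rpow_nonneg (by positivity) _
  set S := ∑ n ∈ range (N+1), w n * v n with hS
  have hSnn : 0 ≤ S := Finset.sum_nonneg fun n _ => mul_nonneg (hwnn n) (hvnn n)
  have hsplit : S = 1 + ∑ n ∈ Icc 1 N, w n * v n := by
    have hins : range (N+1) = insert 0 (Icc 1 N) := by
      ext x; simp only [Finset.mem_range, Finset.mem_insert, Finset.mem_Icc]; omega
    have hw0 : w 0 * v 0 = 1 := by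
      simp [hwdef, hv0, Real.one_rpow]
    rw [hS, hins, Finset.sum_insert (by simp), hw0]
  have hstep2 : ∑ n ∈ Icc 1 N, w n * v n
      = ∑ t ∈ Icc 1 N, ∑ s ∈ range (N - t + 1), w (t + s) * (b t * v s) := by
    have e1 : ∑ n ∈ Icc 1 N, w n * v n
        = ∑ n ∈ Icc 1 N, ∑ t ∈ Icc 1 n, w n * (b t * v (n - t)) := by
      refine Finset.sum_congr rfl fun n hn => ?_
      rw [hrec n (Finset.mem_Icc.1 hn).1, Finset.mul_sum]
    rw [e1, swap2 N (fun n t => w n * (b t * v (n - t)))]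
    refine Finset.sum_congr rfl fun t _ => Finset.sum_congr rfl fun s _ => ?_
    have hts : t + s - t = s := by omega
    rw [hts]
  have hpert : ∀ t ∈ Icc 1 N, ∑ s ∈ range (N - t + 1), w (t + s) * (b t * v s)
      ≤ b t * S + (((t:ℝ)+1) ^ ρ * b t) * (K * C') := by
    intro t ht
    obtain ⟨ht1, htN⟩ := Finset.mem_Icc.1 ht
    have hb1 : ∑ s ∈ range (N - t + 1), w (t + s) * (b t * v s)
        ≤ ∑ s ∈ range (N - t + 1),
            (w s + K * ((t:ℝ)+1) ^ ρ * ((s:ℝ)+1) ^ ρ') * (b t * v s) := by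
      refine Finset.sum_le_sum fun s _ => ?_
      exact mul_le_mul_of_nonneg_right (hw t s) (mul_nonneg (hbnn t) (hvnn s))
    have hb2 : ∑ s ∈ range (N - t + 1),
            (w s + K * ((t:ℝ)+1) ^ ρ * ((s:ℝ)+1) ^ ρ') * (b t * v s)
        = b t * (∑ s ∈ range (N - t + 1), w s * v s)
          + (((t:ℝ)+1) ^ ρ * b t) * (K * (∑ s ∈ range (N - t + 1), ((s:ℝ)+1) ^ ρ' * v s)) := by
      have e2 : ∀ s ∈ range (N - t + 1),
          (w s + K * ((t:ℝ)+1) ^ ρ * ((s:ℝ)+1) ^ ρ') * (b t * v s)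
            = b t * (w s * v s)
              + (((t:ℝ)+1) ^ ρ * b t) * (K * (((s:ℝ)+1) ^ ρ' * v s)) := fun s _ => by ring
      rw [Finset.sum_congr rfl e2, Finset.sum_add_distrib, ← Finset.mul_sum]
      congr 1
      rw [← Finset.mul_sum, ← Finset.mul_sum]
    have hb3 : ∑ s ∈ range (N - t + 1), w s * v s ≤ S := by
      refine Finset.sum_le_sum_of_subset_of_nonneg ?_ fun n _ _ =>
        mul_nonneg (hwnn n) (hvnn n)
      exact Finset.range_subset_range.2 (by omega)
    have hb4 := hrem N t ht1 htN
    calc ∑ s ∈ range (N - t + 1), w (t + s) * (b t * v s)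
        ≤ b t * (∑ s ∈ range (N - t + 1), w s * v s)
          + (((t:ℝ)+1) ^ ρ * b t) * (K * (∑ s ∈ range (N - t + 1), ((s:ℝ)+1) ^ ρ' * v s)) := by
          rw [← hb2]; exact hb1
      _ ≤ b t * S + (((t:ℝ)+1) ^ ρ * b t) * (K * C') := by
          refine add_le_add (mul_le_mul_of_nonneg_left hb3 (hbnn t)) ?_
          exact mul_le_mul_of_nonneg_left hb4
            (mul_nonneg (Real.rpow_nonneg (by positivity) _) (hbnn t))
  have hsum : ∑ n ∈ Icc 1 N, w n * v n ≤ (1 - c) * S + M * (K * C') := by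
    calc ∑ n ∈ Icc 1 N, w n * v n
        = ∑ t ∈ Icc 1 N, ∑ s ∈ range (N - t + 1), w (t + s) * (b t * v s) := hstep2
      _ ≤ ∑ t ∈ Icc 1 N, (b t * S + (((t:ℝ)+1) ^ ρ * b t) * (K * C')) :=
          Finset.sum_le_sum hpert
      _ = (∑ t ∈ Icc 1 N, b t) * S + (∑ t ∈ Icc 1 N, ((t:ℝ)+1) ^ ρ * b t) * (K * C') := by
          rw [Finset.sum_add_distrib, Finset.sum_mul, Finset.sum_mul]
      _ ≤ (1 - c) * S + M * (K * C') := by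
          refine add_le_add (mul_le_mul_of_nonneg_right (hbsum N) hSnn) ?_
          exact mul_le_mul_of_nonneg_right (hMb N) (mul_nonneg hK hC')
  have hcs : c * S ≤ 1 + K * C' * M := by
    have := hsplit
    nlinarith [hsum, hsplit]
  rw [le_div_iff₀ hc]
  linarith
end Moment


section Moment2
variable (v b : ℕ → ℝ)
lemma moment_bound (hv0 : v 0 = 1) (hvnn : ∀ n, 0 ≤ v n) (hbnn : ∀ t, 0 ≤ b t)
    (hrec : ∀ n, 1 ≤ n → v n = ∑ t ∈ Icc 1 n, b t * v (n - t))
    {c M : ℝ} (hc : 0 < c) (hbsum : ∀ N : ℕ, ∑ t ∈ Icc 1 N, b t ≤ 1 - c)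
    (hM : 0 ≤ M) :
    ∀ (k : ℕ) (ρ : ℝ), 0 ≤ ρ → ρ ≤ k →
      (∀ N : ℕ, ∑ t ∈ Icc 1 N, ((t:ℝ)+1) ^ ρ * b t ≤ M) →
      ∃ C, 0 ≤ C ∧ ∀ N : ℕ, ∑ n ∈ range (N+1), ((n:ℝ)+1) ^ ρ * v n ≤ C := by
  have hMb_mono : ∀ σ τ : ℝ, 0 ≤ σ → σ ≤ τ →
      (∀ N : ℕ, ∑ t ∈ Icc 1 N, ((t:ℝ)+1) ^ τ * b t ≤ M) →
      (∀ N : ℕ, ∑ t ∈ Icc 1 N, ((t:ℝ)+1) ^ σ * b t ≤ M) := by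
    intro σ τ hσ hστ hτb N
    refine le_trans (Finset.sum_le_sum fun t _ => ?_) (hτb N)
    refine mul_le_mul_of_nonneg_right ?_ (hbnn t)
    exact Real.rpow_le_rpow_of_exponent_le (by simp) hστ
  intro k
  induction k with
  | zero =>
    intro ρ hρ0 hρk hMb
    have hρ : ρ = 0 := le_antisymm (by exact_mod_cast hρk) hρ0
    subst hρ
    refine ⟨(1 + 0 * 0 * M) / c, by positivity, ?_⟩
    refine core v b hv0 hvnn hbnn hrec hc hbsum 0 0 0 0 le_rfl le_rfl le_rfl hM hMb ?_ ?_
    · intro t s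
      simp [Real.rpow_zero]
    · intro N t _ _
      simp
  | succ k ih =>
    intro ρ hρ0 hρk hMb
    by_cases hk : ρ ≤ k
    · exact ih ρ hρ0 hk hMb
    push_neg at hk
    by_cases h1 : ρ ≤ 1
    · -- use exponent 0 as the lower one
      obtain ⟨C0, hC0nn, hC0⟩ := ih 0 le_rfl (by exact_mod_cast Nat.zero_le k)
        (hMb_mono 0 ρ le_rfl hρ0 hMb)
      refine ⟨(1 + 1 * C0 * M) / c, by positivity, ?_⟩
      refine core v b hv0 hvnn hbnn hrec hc hbsum ρ 0 1 C0 hρ0 zero_le_one hC0nn hM hMb ?_ ?_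
      · intro t s
        have h0 : ((s:ℝ)+1) ^ (0:ℝ) = 1 := Real.rpow_zero _
        have hcast : (((t + s : ℕ):ℝ)+1) = ((s:ℝ)+1) + (t:ℝ) := by push_cast; ring
        rw [hcast, h0]
        have h2 : (((s:ℝ)+1) + (t:ℝ)) ^ ρ ≤ ((s:ℝ)+1) ^ ρ + (t:ℝ) ^ ρ :=
          rpow_add_le (by positivity) (by positivity) hρ0 h1
      -- (t:ℝ)^ρ ≤ ((t:ℝ)+1)^ρ
        have h3 : (t:ℝ) ^ ρ ≤ ((t:ℝ)+1) ^ ρ :=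
          Real.rpow_le_rpow (by positivity) (by linarith) hρ0
        nlinarith
      · intro N t ht1 htN
        have := hC0 (N - t)
        simp only [Real.rpow_zero] at this ⊢
        linarith
    · -- 1 < ρ; use exponent ρ - 1
      push_neg at h1
      have hρ1 : (1:ℝ) ≤ ρ := h1.le
      have hρ'0 : 0 ≤ ρ - 1 := by linarith
      have hρ'k : ρ - 1 ≤ k := by
        have : ρ ≤ (k:ℝ) + 1 := by exact_mod_cast hρk
        linarith
      obtain ⟨C', hC'nn, hC'⟩ := ih (ρ - 1) hρ'0 hρ'k
        (hMb_mono (ρ - 1) ρ hρ'0 (by linarith) hMb)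
      refine ⟨(1 + ρ * C' * M) / c, by positivity, ?_⟩
      refine core v b hv0 hvnn hbnn hrec hc hbsum ρ (ρ - 1) ρ C' hρ0 (by linarith) hC'nn hM
        hMb ?_ ?_
      · intro t s
        set x : ℝ := ((s:ℝ)+1) + (t:ℝ) with hx
        have hcast : (((t + s : ℕ):ℝ)+1) = x := by rw [hx]; push_cast; ring
        have hy0 : (0:ℝ) ≤ (s:ℝ)+1 := by positivity
        have hyx : ((s:ℝ)+1) ≤ x := by
          rw [hx]; linarith [Nat.cast_nonneg (α := ℝ) t]
        have hkey := rpow_sub_rpow_le hy0 hyx hρ1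
        have hxsub : x - (((s:ℝ))+1) = (t:ℝ) := by rw [hx]; ring
        rw [hxsub] at hkey
        -- bound x^(ρ-1) ≤ (t+1)^(ρ-1) * (s+1)^(ρ-1)
        have hx0 : 0 ≤ x := by positivity
        have hxle : x ≤ ((t:ℝ)+1) * ((s:ℝ)+1) := by
          rw [hx]; nlinarith [Nat.cast_nonneg (α := ℝ) t, Nat.cast_nonneg (α := ℝ) s]
        have h4 : x ^ (ρ-1) ≤ (((t:ℝ)+1) * ((s:ℝ)+1)) ^ (ρ-1) :=
          Real.rpow_le_rpow hx0 hxle hρ'0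
        have h5 : (((t:ℝ)+1) * ((s:ℝ)+1)) ^ (ρ-1)
            = ((t:ℝ)+1) ^ (ρ-1) * ((s:ℝ)+1) ^ (ρ-1) :=
          Real.mul_rpow (by positivity) (by positivity)
        have h6 : ((t:ℝ)+1) ^ (ρ-1) * ((t:ℝ)+1) ^ (1:ℝ) = ((t:ℝ)+1) ^ ρ := by
          rw [← Real.rpow_add (by positivity)]; norm_num
        rw [Real.rpow_one] at h6
        have h7 : x ^ (ρ-1) * (t:ℝ) ≤ (((t:ℝ)+1) ^ (ρ-1) * ((s:ℝ)+1) ^ (ρ-1)) * ((t:ℝ)+1) := by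
          refine mul_le_mul (h4.trans_eq h5) (by linarith [Nat.cast_nonneg (α := ℝ) t]) ?_ ?_
          · exact Nat.cast_nonneg t
          · have := Real.rpow_nonneg (by positivity : (0:ℝ) ≤ ((t:ℝ)+1) * ((s:ℝ)+1)) (ρ-1)
            rw [h5] at this; exact this
        have h8 : (((t:ℝ)+1) ^ (ρ-1) * ((s:ℝ)+1) ^ (ρ-1)) * ((t:ℝ)+1)
            = ((t:ℝ)+1) ^ ρ * ((s:ℝ)+1) ^ (ρ-1) := by rw [← h6]; ring
        have h9 : ρ * (x ^ (ρ-1) * (t:ℝ)) ≤ ρ * (((t:ℝ)+1) ^ ρ * ((s:ℝ)+1) ^ (ρ-1)) :=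
          mul_le_mul_of_nonneg_left (h7.trans_eq h8) (by linarith)
        rw [hcast]
        linarith
      · intro N t ht1 htN
        exact mul_le_mul_of_nonneg_left (hC' (N - t)) (by linarith)



end Moment2

section Model
variable {Ω : Type*} (ξ : ℕ → Ω → ℕ)

/-- The event that all clocks started before `n` expire by `n`. -/
def ZS (n : ℕ) : Set Ω := {ω | ∀ k, k < n → ξ k ω + k ≤ n}

/-- The event `ν = m` (for `m ≥ 1`). -/
def NE (m : ℕ) : Set Ω := ZS ξ m ∩ ⋂ j ∈ Finset.Icc 1 (m-1), (ZS ξ j)ᶜ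

/-- The tail event. -/
def TL (m n : ℕ) : Set Ω := {ω | ∀ k, m ≤ k → k < n → ξ k ω + k ≤ n}

/-- Set of good times. -/
def TT (ω : Ω) : Set ℕ := {j | 1 ≤ j ∧ ω ∈ ZS ξ j}

variable {ξ}

lemma nuOf_eq_sInf_TT (ω : Ω) :
    nuOf ξ ω = sInf (Nat.cast '' (TT ξ ω) : Set ENNReal) := by
  unfold nuOf
  congr 1
  ext x
  simp only [Set.mem_setOf_eq, Set.mem_image, TT, ZS, Set.mem_setOf_eq]
  constructor
  · rintro ⟨n, rfl, h1, h2⟩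
    exact ⟨n, ⟨h1, fun k hk => by have := h2 k hk; omega⟩, rfl⟩
  · rintro ⟨n, ⟨h1, h2⟩, rfl⟩
    exact ⟨n, rfl, h1, fun k hk => by have := h2 k hk; omega⟩

lemma nu_eq_coe {ω : Ω} (h : (TT ξ ω).Nonempty) :
    nuOf ξ ω = (sInf (TT ξ ω) : ℕ) := by
  rw [nuOf_eq_sInf_TT]
  apply le_antisymm
  · exact sInf_le ⟨sInf (TT ξ ω), Nat.sInf_mem h, rfl⟩
  · refine le_sInf ?_
    rintro x ⟨n, hn, rfl⟩
    exact_mod_cast Nat.cast_le.2 (Nat.sInf_le hn)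

lemma nu_eq_top {ω : Ω} (h : ¬ (TT ξ ω).Nonempty) : nuOf ξ ω = ⊤ := by
  rw [nuOf_eq_sInf_TT]
  rw [Set.not_nonempty_iff_eq_empty] at h
  rw [h]
  simp

lemma one_le_sInf_TT {ω : Ω} (h : (TT ξ ω).Nonempty) : 1 ≤ sInf (TT ξ ω) :=
  (Nat.sInf_mem h).1

lemma mem_NE_iff {m : ℕ} (hm : 1 ≤ m) {ω : Ω} :
    ω ∈ NE ξ m ↔ (TT ξ ω).Nonempty ∧ sInf (TT ξ ω) = m := by
  constructor
  · rintro ⟨h1, h2⟩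
    have hmem : m ∈ TT ξ ω := ⟨hm, h1⟩
    have hne : (TT ξ ω).Nonempty := ⟨m, hmem⟩
    refine ⟨hne, le_antisymm (Nat.sInf_le hmem) ?_⟩
    by_contra hlt
    push_neg at hlt
    have hin := Nat.sInf_mem hne
    have h1' : 1 ≤ sInf (TT ξ ω) := hin.1
    have : ω ∈ (ZS ξ (sInf (TT ξ ω)))ᶜ := by
      have := Set.mem_iInter₂.1 h2 (sInf (TT ξ ω))
      exact this (Finset.mem_Icc.2 ⟨h1', by omega⟩)
    exact this hin.2
  · rintro ⟨hne, rfl⟩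
    have hin := Nat.sInf_mem hne
    refine ⟨hin.2, ?_⟩
    refine Set.mem_iInter₂.2 fun j hj => ?_
    rw [Finset.mem_Icc] at hj
    intro hZ
    have : j ∈ TT ξ ω := ⟨hj.1, hZ⟩
    have := Nat.sInf_le this
    omega

lemma NE_disjoint {m m' : ℕ} (hm : 1 ≤ m) (hm' : 1 ≤ m') (hne : m ≠ m') :
    Disjoint (NE ξ m) (NE (Ω := Ω) ξ m') := by
  rw [Set.disjoint_left]
  intro ω h1 h2
  rw [mem_NE_iff hm] at h1
  rw [mem_NE_iff hm'] at h2
  exact hne (h1.2.symm.trans h2.2)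

lemma nu_le_coe_iff {ω : Ω} {n : ℕ} :
    nuOf ξ ω ≤ (n : ENNReal) ↔ (TT ξ ω).Nonempty ∧ sInf (TT ξ ω) ≤ n := by
  by_cases h : (TT ξ ω).Nonempty
  · rw [nu_eq_coe h]
    simp only [h, true_and]
    exact_mod_cast Nat.cast_le
  · rw [nu_eq_top h]
    simp only [h, false_and, iff_false]
    exact fun hc => (ENNReal.natCast_ne_top n) (top_le_iff.1 hc)

lemma nule_eq_biUnion (n : ℕ) :
    {ω : Ω | nuOf ξ ω ≤ (n : ENNReal)} = ⋃ m ∈ Finset.Icc 1 n, NE ξ m := by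
  ext ω
  simp only [Set.mem_setOf_eq, Set.mem_iUnion, exists_prop, nu_le_coe_iff]
  constructor
  · rintro ⟨hne, hle⟩
    refine ⟨sInf (TT ξ ω), Finset.mem_Icc.2 ⟨one_le_sInf_TT hne, hle⟩, ?_⟩
    rw [mem_NE_iff (one_le_sInf_TT hne)]
    exact ⟨hne, rfl⟩
  · rintro ⟨m, hm, hmem⟩
    rw [Finset.mem_Icc] at hm
    rw [mem_NE_iff hm.1] at hmem
    exact ⟨hmem.1, hmem.2 ▸ hm.2⟩

lemma ZS_partition {n : ℕ} (hn : 1 ≤ n) :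
    (ZS ξ n : Set Ω) = ⋃ m ∈ Finset.Icc 1 n, (NE ξ m ∩ TL ξ m n) := by
  ext ω
  simp only [Set.mem_iUnion, exists_prop]
  constructor
  · intro hω
    have hmem : n ∈ TT ξ ω := ⟨hn, hω⟩
    have hne : (TT ξ ω).Nonempty := ⟨n, hmem⟩
    set m := sInf (TT ξ ω) with hmdef
    have hm1 : 1 ≤ m := one_le_sInf_TT hne
    have hmn : m ≤ n := Nat.sInf_le hmem
    refine ⟨m, Finset.mem_Icc.2 ⟨hm1, hmn⟩, ?_, ?_⟩
    · rw [mem_NE_iff hm1]; exact ⟨hne, rfl⟩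
    · intro k _ hk2
      exact hω k hk2
  · rintro ⟨m, hm, hNE, hTL⟩
    rw [Finset.mem_Icc] at hm
    rw [mem_NE_iff hm.1] at hNE
    intro k hk
    rcases lt_or_ge k m with h | h
    · have hZm : ω ∈ ZS ξ m := by
        have := hNE.2 ▸ Nat.sInf_mem hNE.1
        exact (hNE.2 ▸ (Nat.sInf_mem hNE.1).2)
      have := hZm k h
      omega
    · exact hTL k h hk

variable [MeasurableSpace Ω] (hmeas : ∀ k, Measurable (ξ k))
include hmeas

lemma meas_clock (k n c : ℕ) : MeasurableSet {ω : Ω | ξ k ω + k ≤ c} :=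
  (hmeas k) (show MeasurableSet {x : ℕ | x + k ≤ c} from trivial)

lemma meas_ZS (n : ℕ) : MeasurableSet (ZS ξ n : Set Ω) := by
  have : (ZS ξ n : Set Ω) = ⋂ k ∈ Finset.range n, {ω : Ω | ξ k ω + k ≤ n} := by
    ext ω
    simp [ZS, Finset.mem_range]
  rw [this]
  exact MeasurableSet.biInter (Finset.range n).countable_toSet
    fun k _ => meas_clock hmeas k n n

lemma meas_NE (m : ℕ) : MeasurableSet (NE ξ m : Set Ω) := by
  refine (meas_ZS hmeas m).inter ?_
  exact MeasurableSet.biInter (Finset.Icc 1 (m-1)).countable_toSet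
    fun j _ => (meas_ZS hmeas j).compl

lemma meas_TL (m n : ℕ) : MeasurableSet (TL ξ m n : Set Ω) := by
  have : (TL ξ m n : Set Ω) = ⋂ k ∈ Finset.Ico m n, {ω : Ω | ξ k ω + k ≤ n} := by
    ext ω
    simp [TL, Finset.mem_Ico]
  rw [this]
  exact MeasurableSet.biInter (Finset.Ico m n).countable_toSet
    fun k _ => meas_clock hmeas k n n

lemma meas_nule (n : ℕ) : MeasurableSet {ω : Ω | nuOf ξ ω ≤ (n : ENNReal)} := by
  rw [nule_eq_biUnion]
  exact MeasurableSet.biUnion (Finset.Icc 1 n).countable_toSet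
    fun m _ => meas_NE hmeas m

end Model




/-- the real quantities -/
def qf (p : ℕ → ℝ) (m : ℕ) : ℝ := ∏ j ∈ Icc 1 m, (1 - p j)
def Ff (p : ℕ → ℝ) (m : ℕ) : ℝ := 1 - qf p m
def zf (p : ℕ → ℝ) (n : ℕ) : ℝ := ∏ m ∈ Icc 1 n, Ff p m

section PBounds
variable {p : ℕ → ℝ} (hp : ∀ k, 0 ≤ p k ∧ p k < 1)
include hp

lemma qf_nonneg (m : ℕ) : 0 ≤ qf p m :=
  Finset.prod_nonneg fun j _ => by linarith [(hp j).2]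

lemma qf_le_one (m : ℕ) : qf p m ≤ 1 :=
  Finset.prod_le_one (fun j _ => by linarith [(hp j).2]) (fun j _ => by linarith [(hp j).1])

lemma Ff_nonneg (m : ℕ) : 0 ≤ Ff p m := by
  have := qf_le_one hp m; unfold Ff; linarith

lemma Ff_le_one (m : ℕ) : Ff p m ≤ 1 := by
  have := qf_nonneg hp m; unfold Ff; linarith

lemma qf_le (hm : 1 ≤ m) : qf p m ≤ 1 - p 1 := by
  unfold qf
  have h1 : (1:ℕ) ∈ Icc 1 m := Finset.mem_Icc.2 ⟨le_rfl, hm⟩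
  rw [← Finset.mul_prod_erase _ _ h1]
  have hle : ∏ j ∈ (Icc 1 m).erase 1, (1 - p j) ≤ 1 :=
    Finset.prod_le_one (fun j _ => by linarith [(hp j).2]) (fun j _ => by linarith [(hp j).1])
  have h0 : (0:ℝ) ≤ 1 - p 1 := by linarith [(hp 1).2]
  nlinarith

lemma Ff_ge (hm : 1 ≤ m) : p 1 ≤ Ff p m := by
  have := qf_le hp hm; unfold Ff; linarith

lemma zf_nonneg (n : ℕ) : 0 ≤ zf p n := Finset.prod_nonneg fun m _ => Ff_nonneg hp m

lemma zf_le_one (n : ℕ) : zf p n ≤ 1 :=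
  Finset.prod_le_one (fun m _ => Ff_nonneg hp m) (fun m _ => Ff_le_one hp m)

lemma zf_zero : zf p 0 = 1 := by simp [zf]

lemma zf_succ (t : ℕ) (ht : 1 ≤ t) : zf p t = zf p (t-1) * Ff p t := by
  obtain ⟨s, rfl⟩ : ∃ s, t = s + 1 := ⟨t - 1, by omega⟩
  unfold zf
  rw [Finset.prod_Icc_succ_top (by omega)]
  simp

lemma bR_nonneg (t : ℕ) (ht : 1 ≤ t) : 0 ≤ zf p (t-1) - zf p t := by
  rw [zf_succ hp t ht]
  have h1 := zf_nonneg hp (t-1)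
  have h2 := Ff_le_one hp t
  nlinarith

lemma bR_le_qf (t : ℕ) (ht : 1 ≤ t) : zf p (t-1) - zf p t ≤ qf p t := by
  rw [zf_succ hp t ht]
  have h1 := zf_le_one hp (t-1)
  have h2 := zf_nonneg hp (t-1)
  have h3 := qf_nonneg hp t
  have : zf p (t-1) - zf p (t-1) * Ff p t = zf p (t-1) * qf p t := by unfold Ff; ring
  rw [this]
  nlinarith
end PBounds

/-- Weierstrass product inequality. -/
lemma one_sub_sum_le_prod {s : Finset ℕ} {f : ℕ → ℝ}
    (h0 : ∀ i ∈ s, 0 ≤ f i) (h1 : ∀ i ∈ s, f i ≤ 1) :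
    1 - ∑ i ∈ s, f i ≤ ∏ i ∈ s, (1 - f i) := by
  induction s using Finset.cons_induction with
  | empty => simp
  | cons a s ha ih =>
    rw [Finset.prod_cons, Finset.sum_cons]
    have hIH := ih (fun i hi => h0 i (Finset.mem_cons_of_mem hi))
      (fun i hi => h1 i (Finset.mem_cons_of_mem hi))
    have hfa0 := h0 a (Finset.mem_cons_self a s)
    have hfa1 := h1 a (Finset.mem_cons_self a s)
    have hsum0 : 0 ≤ ∑ i ∈ s, f i :=
      Finset.sum_nonneg fun i hi => h0 i (Finset.mem_cons_of_mem hi)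
    nlinarith

section Measure
variable {Ω : Type*} [MeasurableSpace Ω] {μ : Measure Ω} [IsProbabilityMeasure μ]
  {ξ : ℕ → Ω → ℕ} {p : ℕ → ℝ}
  (hmeas : ∀ k, Measurable (ξ k))
  (hindep : iIndepFun (β := fun _ : ℕ => ℕ) ξ μ)
  (hp : ∀ k, 0 ≤ p k ∧ p k < 1)
  (htail : ∀ k n : ℕ, μ {ω | n < ξ k ω} = ENNReal.ofReal (∏ j ∈ Finset.Icc 1 n, (1 - p j)))

include hmeas hp htail in
lemma mu_xi_le (k M : ℕ) : μ {ω | ξ k ω ≤ M} = ENNReal.ofReal (Ff p M) := by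
  have hc : {ω | ξ k ω ≤ M} = {ω | M < ξ k ω}ᶜ := by
    ext ω; simp [not_lt]
  have hms : MeasurableSet {ω | M < ξ k ω} :=
    (hmeas k) (show MeasurableSet {x : ℕ | M < x} from trivial)
  rw [hc, measure_compl hms (measure_ne_top μ _), htail k M, measure_univ]
  unfold Ff qf
  rw [ENNReal.ofReal_sub _ (show (0:ℝ) ≤ ∏ j ∈ Icc 1 M, (1 - p j) from qf_nonneg hp M), ENNReal.ofReal_one]

include hmeas hindep hp htail in
lemma mu_TL (m n : ℕ) : μ (TL ξ m n) = ENNReal.ofReal (zf p (n - m)) := by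
  have hrep : (TL ξ m n : Set Ω) = ⋂ k ∈ Finset.Ico m n, {ω : Ω | ξ k ω + k ≤ n} := by
    ext ω; simp [TL, Finset.mem_Ico]
  have hbi := hindep.meas_biInter (S := Finset.Ico m n)
    (s := fun k => {ω : Ω | ξ k ω + k ≤ n})
    (fun k _ => ⟨{x | x + k ≤ n}, trivial, rfl⟩)
  rw [hrep, hbi]
  have hterm : ∀ k ∈ Finset.Ico m n,
      μ {ω : Ω | ξ k ω + k ≤ n} = ENNReal.ofReal (Ff p (n - k)) := by
    intro k hk
    rw [Finset.mem_Ico] at hk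
    have : {ω : Ω | ξ k ω + k ≤ n} = {ω : Ω | ξ k ω ≤ n - k} := by
      ext ω; constructor <;> intro h <;> simp only [Set.mem_setOf_eq] at * <;> omega
    rw [this, mu_xi_le hmeas hp htail k (n - k)]
  rw [Finset.prod_congr rfl hterm]
  rw [← ENNReal.ofReal_prod_of_nonneg (fun k _ => Ff_nonneg hp (n - k))]
  congr 1
  unfold zf
  refine Finset.prod_nbij' (fun k => n - k) (fun j => n - j) ?_ ?_ ?_ ?_ ?_
  · intro k hk; rw [Finset.mem_Ico] at hk; rw [Finset.mem_Icc]; omega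
  · intro j hj; rw [Finset.mem_Icc] at hj; rw [Finset.mem_Ico]; omega
  · intro k hk; rw [Finset.mem_Ico] at hk; omega
  · intro j hj; rw [Finset.mem_Icc] at hj; omega
  · intro k _; rfl

lemma ZS_eq_TL0 (n : ℕ) : (ZS ξ n : Set Ω) = TL ξ 0 n := by
  ext ω; simp [ZS, TL]

include hmeas hindep hp htail in
lemma mu_ZS (n : ℕ) : μ (ZS ξ n) = ENNReal.ofReal (zf p n) := by
  rw [ZS_eq_TL0, mu_TL hmeas hindep hp htail 0 n]
  simp

/-- Prefix predicate on tuples. -/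
def QV (m : ℕ) (j : ℕ) (v : (i : (Finset.range m : Finset ℕ)) → ℕ) : Prop :=
  ∀ i : (Finset.range m : Finset ℕ), (i : ℕ) < j → v i + (i : ℕ) ≤ j

lemma ZS_iff_QV {m j : ℕ} (hj : j ≤ m) (ω : Ω) :
    ω ∈ ZS ξ j ↔ QV m j (fun i => ξ (i : ℕ) ω) := by
  constructor
  · intro h i hi
    exact h i hi
  · intro h k hk
    exact h ⟨k, Finset.mem_range.2 (lt_of_lt_of_le hk hj)⟩ hk

lemma NE_eq_preimage (m : ℕ) :
    (NE ξ m : Set Ω) = (fun ω (i : (Finset.range m : Finset ℕ)) => ξ (i : ℕ) ω) ⁻¹'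
      {v | QV m m v ∧ ∀ j ∈ Finset.Icc 1 (m-1), ¬ QV m j v} := by
  ext ω
  simp only [NE, Set.mem_inter_iff, Set.mem_iInter, Set.mem_preimage, Set.mem_setOf_eq,
    Set.mem_compl_iff]
  constructor
  · rintro ⟨h1, h2⟩
    refine ⟨(ZS_iff_QV le_rfl ω).1 h1, fun j hj hQ => ?_⟩
    rw [Finset.mem_Icc] at hj
    exact (h2 j (Finset.mem_Icc.2 hj)) ((ZS_iff_QV (by omega) ω).2 hQ)
  · rintro ⟨h1, h2⟩
    refine ⟨(ZS_iff_QV le_rfl ω).2 h1, fun j hj hZ => ?_⟩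
    rw [Finset.mem_Icc] at hj
    exact h2 j (Finset.mem_Icc.2 hj) ((ZS_iff_QV (by omega) ω).1 hZ)

lemma TL_eq_preimage (m n : ℕ) :
    (TL ξ m n : Set Ω) = (fun ω (i : (Finset.Ico m n : Finset ℕ)) => ξ (i : ℕ) ω) ⁻¹'
      {v | ∀ i : (Finset.Ico m n : Finset ℕ), v i + (i : ℕ) ≤ n} := by
  ext ω
  simp only [TL, Set.mem_preimage, Set.mem_setOf_eq]
  constructor
  · rintro h ⟨i, hi⟩
    rw [Finset.mem_Ico] at hi
    exact h i hi.1 hi.2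
  · intro h k hk1 hk2
    exact h ⟨k, Finset.mem_Ico.2 ⟨hk1, hk2⟩⟩

include hmeas hindep in
lemma mu_NE_inter_TL (m n : ℕ) :
    μ (NE ξ m ∩ TL ξ m n) = μ (NE ξ m) * μ (TL ξ m n) := by
  have hdisj : Disjoint (Finset.range m) (Finset.Ico m n) := by
    rw [Finset.disjoint_left]
    intro a ha hb
    rw [Finset.mem_range] at ha
    rw [Finset.mem_Ico] at hb
    omega
  have hIF := hindep.indepFun_finset (Finset.range m) (Finset.Ico m n) hdisj hmeas
  rw [NE_eq_preimage, TL_eq_preimage]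
  exact hIF.measure_inter_preimage_eq_mul _ _
    (Set.to_countable _).measurableSet (Set.to_countable _).measurableSet

end Measure

section Measure2
variable {Ω : Type*} [MeasurableSpace Ω] {μ : Measure Ω} [IsProbabilityMeasure μ]
  {ξ : ℕ → Ω → ℕ} {p : ℕ → ℝ}
  (hmeas : ∀ k, Measurable (ξ k))
  (hindep : iIndepFun (β := fun _ : ℕ => ℕ) ξ μ)
  (hp : ∀ k, 0 ≤ p k ∧ p k < 1)
  (htail : ∀ k n : ℕ, μ {ω | n < ξ k ω} = ENNReal.ofReal (∏ j ∈ Finset.Icc 1 n, (1 - p j)))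

include hmeas hindep hp htail in
lemma renewal_real {n : ℕ} (hn : 1 ≤ n) :
    zf p n = ∑ m ∈ Icc 1 n, (μ (NE ξ m)).toReal * zf p (n - m) := by
  have hdisj : Set.PairwiseDisjoint ↑(Finset.Icc 1 n)
      (fun m => NE ξ m ∩ TL ξ m n : ℕ → Set Ω) := by
    intro m hm m' hm' hne
    simp only [Finset.coe_Icc, Set.mem_Icc] at hm hm'
    exact Disjoint.mono Set.inter_subset_left Set.inter_subset_left
      (NE_disjoint hm.1 hm'.1 hne)
  have hENN : μ (ZS ξ n) = ∑ m ∈ Icc 1 n, μ (NE ξ m) * ENNReal.ofReal (zf p (n - m)) := by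
    rw [ZS_partition (ξ := ξ) hn, measure_biUnion_finset hdisj
      (fun m _ => (meas_NE hmeas m).inter (meas_TL hmeas m n))]
    exact Finset.sum_congr rfl fun m _ => by
      rw [mu_NE_inter_TL hmeas hindep m n, mu_TL hmeas hindep hp htail m n]
  have := congrArg ENNReal.toReal hENN
  rw [mu_ZS hmeas hindep hp htail n, ENNReal.toReal_ofReal (zf_nonneg hp n)] at this
  rw [this, ENNReal.toReal_sum (fun m _ => ENNReal.mul_ne_top (measure_ne_top μ _)
    ENNReal.ofReal_ne_top)]
  exact Finset.sum_congr rfl fun m _ => by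
    rw [ENNReal.toReal_mul, ENNReal.toReal_ofReal (zf_nonneg hp (n - m))]

include hmeas in
lemma vR_eq (n : ℕ) :
    (μ ({ω : Ω | nuOf ξ ω ≤ (n : ENNReal)}ᶜ)).toReal
      = 1 - ∑ m ∈ Icc 1 n, (μ (NE ξ m)).toReal := by
  have hdisj : Set.PairwiseDisjoint ↑(Finset.Icc 1 n) (fun m => NE ξ m : ℕ → Set Ω) := by
    intro m hm m' hm' hne
    simp only [Finset.coe_Icc, Set.mem_Icc] at hm hm'
    exact NE_disjoint hm.1 hm'.1 hne
  have hU : μ {ω : Ω | nuOf ξ ω ≤ (n : ENNReal)} = ∑ m ∈ Icc 1 n, μ (NE ξ m) := by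
    rw [nule_eq_biUnion (ξ := ξ) n, measure_biUnion_finset hdisj (fun m _ => meas_NE hmeas m)]
  have hle : ∑ m ∈ Icc 1 n, μ (NE ξ m) ≤ 1 := by
    rw [← hU]; exact prob_le_one
  rw [measure_compl (meas_nule hmeas n) (measure_ne_top μ _), measure_univ, hU]
  rw [ENNReal.toReal_sub_of_le hle ENNReal.one_ne_top, ENNReal.toReal_one,
    ENNReal.toReal_sum (fun m _ => measure_ne_top μ _)]

include hmeas hp htail in
lemma tail_moment_bound {r : ℝ} (hr : 1 ≤ r)
    (hne : ∫⁻ ω, (ξ 0 ω : ENNReal) ^ r ∂μ ≠ ⊤) :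
    ∀ N : ℕ, ∑ t ∈ Icc 1 N, ((t:ℝ)+1) ^ (r-1) * qf p t
      ≤ (∫⁻ ω, (ξ 0 ω : ENNReal) ^ r ∂μ).toReal := by
  intro N
  set I := ∫⁻ ω, (ξ 0 ω : ENNReal) ^ r ∂μ with hI
  have hms : ∀ t : ℕ, MeasurableSet {ω : Ω | t < ξ 0 ω} :=
    fun t => (hmeas 0) (show MeasurableSet {x : ℕ | t < x} from trivial)
  have hENN : ∑ t ∈ Icc 1 N, ENNReal.ofReal (((t:ℝ)+1) ^ (r-1)) * μ {ω | t < ξ 0 ω} ≤ I := by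
    have hie : ∀ t ∈ Icc 1 N, ENNReal.ofReal (((t:ℝ)+1) ^ (r-1)) * μ {ω | t < ξ 0 ω}
        = ∫⁻ ω, Set.indicator {ω' : Ω | t < ξ 0 ω'}
            (fun _ => ENNReal.ofReal (((t:ℝ)+1) ^ (r-1))) ω ∂μ :=
      fun t _ => (lintegral_indicator_const (hms t) _).symm
    rw [Finset.sum_congr rfl hie, ← lintegral_finset_sum _
      (fun t _ => measurable_const.indicator (hms t))]
    refine lintegral_mono fun ω => ?_
    set K := ξ 0 ω with hK
    rcases Nat.eq_zero_or_pos K with hK0 | hKpos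
    · have : ∀ t ∈ Icc 1 N, Set.indicator {ω' : Ω | t < ξ 0 ω'}
          (fun _ => ENNReal.ofReal (((t:ℝ)+1) ^ (r-1))) ω = 0 := by
        intro t ht
        rw [Set.indicator_apply_eq_zero]
        intro hmem
        simp only [Set.mem_setOf_eq, ← hK, hK0] at hmem
        omega
      rw [Finset.sum_congr rfl this]
      simp
    · have hsum : ∑ t ∈ Icc 1 N, Set.indicator {ω' : Ω | t < ξ 0 ω'}
          (fun _ => ENNReal.ofReal (((t:ℝ)+1) ^ (r-1))) ω
          = ∑ t ∈ (Icc 1 N).filter (fun t => t < K),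
              ENNReal.ofReal (((t:ℝ)+1) ^ (r-1)) := by
        rw [Finset.sum_filter]
        refine Finset.sum_congr rfl fun t _ => ?_
        rw [Set.indicator_apply]
        by_cases h : t < K
        · rw [if_pos h, if_pos (by simpa [Set.mem_setOf_eq, ← hK] using h)]
        · rw [if_neg h, if_neg (by simpa [Set.mem_setOf_eq, ← hK] using h)]
      rw [hsum]
      have hsub : (Icc 1 N).filter (fun t => t < K) ⊆ Icc 1 (K - 1) := by
        intro t ht
        simp only [Finset.mem_filter, Finset.mem_Icc] at *
        omega
      have h1 : ∑ t ∈ (Icc 1 N).filter (fun t => t < K),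
          ENNReal.ofReal (((t:ℝ)+1) ^ (r-1))
          ≤ ∑ t ∈ Icc 1 (K-1), ENNReal.ofReal (((t:ℝ)+1) ^ (r-1)) :=
        Finset.sum_le_sum_of_subset hsub
      have h2 : ∑ t ∈ Icc 1 (K-1), ENNReal.ofReal (((t:ℝ)+1) ^ (r-1))
          ≤ ∑ t ∈ Icc 1 (K-1), ENNReal.ofReal (((K:ℝ)) ^ (r-1)) := by
        refine Finset.sum_le_sum fun t ht => ?_
        refine ENNReal.ofReal_le_ofReal ?_
        refine Real.rpow_le_rpow (by positivity) ?_ (by linarith)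
        rw [Finset.mem_Icc] at ht
        have : (t:ℝ) + 1 ≤ (K:ℝ) := by
          have : t + 1 ≤ K := by omega
          exact_mod_cast this
        linarith
      have h3 : ∑ t ∈ Icc 1 (K-1), ENNReal.ofReal (((K:ℝ)) ^ (r-1))
          = (K - 1 : ℕ) * ENNReal.ofReal (((K:ℝ)) ^ (r-1)) := by
        rw [Finset.sum_const, Nat.card_Icc]
        simp [nsmul_eq_mul]
      have h4 : ((K - 1 : ℕ) : ENNReal) * ENNReal.ofReal (((K:ℝ)) ^ (r-1))
          ≤ ENNReal.ofReal ((K:ℝ)) * ENNReal.ofReal (((K:ℝ)) ^ (r-1)) := by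
        refine mul_le_mul_left ?_ _
        rw [← ENNReal.ofReal_natCast (K-1)]
        refine ENNReal.ofReal_le_ofReal ?_
        exact_mod_cast Nat.sub_le K 1
      have h5 : ENNReal.ofReal ((K:ℝ)) * ENNReal.ofReal (((K:ℝ)) ^ (r-1))
          = ENNReal.ofReal ((K:ℝ) ^ r) := by
        rw [← ENNReal.ofReal_mul (by positivity)]
        congr 1
        have hKr : (0:ℝ) < (K:ℝ) := by exact_mod_cast hKpos
        have e : (K:ℝ) ^ r = (K:ℝ) ^ (1:ℝ) * (K:ℝ) ^ (r-1) := by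
          rw [← Real.rpow_add hKr]; norm_num
        rw [e, Real.rpow_one]
      have h6 : ((K : ℕ) : ENNReal) ^ r = ENNReal.ofReal ((K:ℝ) ^ r) := by
        rw [← ENNReal.ofReal_natCast K,
          ENNReal.ofReal_rpow_of_nonneg (Nat.cast_nonneg K) (by linarith)]
      calc ∑ t ∈ (Icc 1 N).filter (fun t => t < K), ENNReal.ofReal (((t:ℝ)+1) ^ (r-1))
          ≤ ∑ t ∈ Icc 1 (K-1), ENNReal.ofReal (((t:ℝ)+1) ^ (r-1)) := h1
        _ ≤ ∑ t ∈ Icc 1 (K-1), ENNReal.ofReal (((K:ℝ)) ^ (r-1)) := h2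
        _ = ((K - 1 : ℕ) : ENNReal) * ENNReal.ofReal (((K:ℝ)) ^ (r-1)) := h3
        _ ≤ ENNReal.ofReal ((K:ℝ)) * ENNReal.ofReal (((K:ℝ)) ^ (r-1)) := h4
        _ = ENNReal.ofReal ((K:ℝ) ^ r) := h5
        _ = ((K : ℕ) : ENNReal) ^ r := h6.symm
  have hterm : ∀ t ∈ Icc 1 N, ENNReal.ofReal (((t:ℝ)+1) ^ (r-1)) * μ {ω : Ω | t < ξ 0 ω}
      = ENNReal.ofReal ((((t:ℝ)+1) ^ (r-1)) * qf p t) := by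
    intro t _
    rw [htail 0 t, ← ENNReal.ofReal_mul (by positivity)]
    rfl
  rw [Finset.sum_congr rfl hterm] at hENN
  rw [← ENNReal.ofReal_sum_of_nonneg
    (fun t _ => mul_nonneg (by positivity) (qf_nonneg hp t))] at hENN
  exact (ENNReal.ofReal_le_iff_le_toReal hne).1 hENN

end Measure2
end Stmt10Aux

namespace Stmt10Aux
open Finset

/-- Lower bound on `zf` given a tail-smallness point `m₀`. -/
lemma zf_lower {p : ℕ → ℝ} (hp : ∀ k, 0 ≤ p k ∧ p k < 1) (hp1 : 0 < p 1) (m₀ : ℕ)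
    (hhalf : ∀ N : ℕ, ∑ t ∈ Icc (m₀+1) N, qf p t ≤ 1/2) :
    ∀ N : ℕ, p 1 ^ m₀ * (1/2) ≤ zf p N := by
  intro N
  rw [zf, ← Finset.prod_filter_mul_prod_filter_not (Icc 1 N) (fun m => m ≤ m₀)]
  have hA : p 1 ^ m₀ ≤ ∏ m ∈ (Icc 1 N).filter (fun m => m ≤ m₀), Ff p m := by
    have h1 : ∏ m ∈ (Icc 1 N).filter (fun m => m ≤ m₀), p 1
        ≤ ∏ m ∈ (Icc 1 N).filter (fun m => m ≤ m₀), Ff p m := by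
      refine Finset.prod_le_prod (fun m _ => hp1.le) (fun m hm => ?_)
      rw [Finset.mem_filter, Finset.mem_Icc] at hm
      exact Ff_ge hp hm.1.1
    rw [Finset.prod_const] at h1
    refine le_trans ?_ h1
    refine pow_le_pow_of_le_one hp1.le (hp 1).2.le ?_
    have hsub : (Icc 1 N).filter (fun m => m ≤ m₀) ⊆ Icc 1 m₀ := by
      intro m hm
      rw [Finset.mem_filter, Finset.mem_Icc] at hm
      rw [Finset.mem_Icc]
      omega
    calc ((Icc 1 N).filter (fun m => m ≤ m₀)).card ≤ (Icc 1 m₀).card :=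
          Finset.card_le_card hsub
      _ = m₀ := by rw [Nat.card_Icc]; omega
  have hBset : (Icc 1 N).filter (fun m => ¬ m ≤ m₀) = Icc (m₀+1) N := by
    ext m
    simp only [Finset.mem_filter, Finset.mem_Icc]
    omega
  have hB : (1/2 : ℝ) ≤ ∏ m ∈ (Icc 1 N).filter (fun m => ¬ m ≤ m₀), Ff p m := by
    rw [hBset]
    have := one_sub_sum_le_prod (s := Icc (m₀+1) N) (f := qf p)
      (fun i _ => qf_nonneg hp i) (fun i _ => qf_le_one hp i)
    have h2 := hhalf N
    calc (1/2 : ℝ) ≤ 1 - ∑ t ∈ Icc (m₀+1) N, qf p t := by linarith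
      _ ≤ ∏ i ∈ Icc (m₀+1) N, (1 - qf p i) := this
      _ = ∏ i ∈ Icc (m₀+1) N, Ff p i := rfl
  have hAnn : (0:ℝ) ≤ ∏ m ∈ (Icc 1 N).filter (fun m => m ≤ m₀), Ff p m :=
    Finset.prod_nonneg fun m _ => Ff_nonneg hp m
  calc p 1 ^ m₀ * (1/2)
      ≤ (∏ m ∈ (Icc 1 N).filter (fun m => m ≤ m₀), Ff p m)
        * ∏ m ∈ (Icc 1 N).filter (fun m => ¬ m ≤ m₀), Ff p m :=
        mul_le_mul hA hB (by norm_num) hAnn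
    _ = _ := rfl

end Stmt10Aux

open Stmt10Aux Finset in
/-- `ν` has as many moments as `ξ`. -/
theorem stmt_10 (p : ℕ → ℝ) (hp : ∀ k, 0 ≤ p k ∧ p k < 1) (hp1 : 0 < p 1)
    {Ω : Type*} [MeasurableSpace Ω] (μ : Measure Ω) [IsProbabilityMeasure μ]
    (ξ : ℕ → Ω → ℕ) (hmeas : ∀ k, Measurable (ξ k))
    (hindep : iIndepFun (β := fun _ : ℕ => ℕ) ξ μ)
    (htail : ∀ k n : ℕ, μ {ω | n < ξ k ω}
      = ENNReal.ofReal (∏ j ∈ Finset.Icc 1 n, (1 - p j)))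
    (r : ℝ) (hr : 1 ≤ r)
    (hmom : ∫⁻ ω, (ξ 0 ω : ENNReal) ^ r ∂μ < ⊤) :
    ∫⁻ ω, (nuOf ξ ω) ^ r ∂μ < ⊤ := by
  classical
  have hr0 : (0:ℝ) ≤ r - 1 := by linarith
  have hrpos : (0:ℝ) < r := by linarith
  set I := ∫⁻ ω, (ξ 0 ω : ENNReal) ^ r ∂μ with hIdef
  have hIne : I ≠ ⊤ := hmom.ne
  set M := I.toReal with hMdef
  have hMnn : (0:ℝ) ≤ M := ENNReal.toReal_nonneg
  have hMb : ∀ N : ℕ, ∑ t ∈ Icc 1 N, ((t:ℝ)+1) ^ (r-1) * qf p t ≤ M :=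
    tail_moment_bound hmeas hp htail hr hIne
  -- the sequences
  set aR : ℕ → ℝ := fun m => (μ (NE ξ m)).toReal with haRdef
  set vR : ℕ → ℝ := fun n => (μ ({ω : Ω | nuOf ξ ω ≤ (n : ENNReal)}ᶜ)).toReal with hvRdef
  set bR : ℕ → ℝ := fun t => zf p (t-1) - zf p t with hbRdef
  have hveq : ∀ n, vR n = 1 - ∑ m ∈ Icc 1 n, aR m := fun n => vR_eq hmeas n
  have hv0 : vR 0 = 1 := by rw [hveq 0]; simp
  have hvnn : ∀ n, 0 ≤ vR n := fun n => ENNReal.toReal_nonneg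
  have hbnn : ∀ t, 0 ≤ bR t := by
    intro t
    rcases Nat.eq_zero_or_pos t with h | h
    · subst h; simp [hbRdef]
    · exact bR_nonneg hp t h
  have hRen : ∀ n, 1 ≤ n → zf p n = ∑ m ∈ Icc 1 n, aR m * zf p (n - m) :=
    fun n hn => renewal_real hmeas hindep hp htail hn
  have hvrec : ∀ n, 1 ≤ n → vR n = ∑ t ∈ Icc 1 n, bR t * vR (n - t) :=
    conv_identity (zf p) aR vR (zf_zero hp) hRen hveq
  -- partial sums of qf are bounded, choose m₀
  have hq_par : ∀ N : ℕ, ∑ t ∈ Icc 1 N, qf p t ≤ M := by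
    intro N
    refine le_trans (Finset.sum_le_sum fun t _ => ?_) (hMb N)
    have h1 : (1:ℝ) ≤ ((t:ℝ)+1) ^ (r-1) := by
      calc (1:ℝ) = (1:ℝ) ^ (r-1) := (Real.one_rpow _).symm
        _ ≤ ((t:ℝ)+1) ^ (r-1) :=
          Real.rpow_le_rpow zero_le_one (by linarith [Nat.cast_nonneg (α := ℝ) t]) hr0
    nlinarith [qf_nonneg hp t]
  set g : ℕ → ℝ := fun N => ∑ t ∈ Icc 1 N, qf p t with hgdef
  have hgmono : Monotone g := by
    intro N N' hNN
    refine Finset.sum_le_sum_of_subset_of_nonneg ?_ (fun t _ _ => qf_nonneg hp t)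
    exact Finset.Icc_subset_Icc le_rfl hNN
  have hgbdd : BddAbove (Set.range g) := ⟨M, by rintro x ⟨N, rfl⟩; exact hq_par N⟩
  set Lsup := ⨆ N, g N with hLdef
  obtain ⟨m₀, hm₀⟩ : ∃ m₀, Lsup - 1/2 < g m₀ := by
    obtain ⟨m₀, hm₀⟩ := exists_lt_of_lt_ciSup (show Lsup - 1/2 < Lsup by
      have : (0:ℝ) < 1/2 := by norm_num
      linarith)
    exact ⟨m₀, hm₀⟩
  have hhalf : ∀ N : ℕ, ∑ t ∈ Icc (m₀+1) N, qf p t ≤ 1/2 := by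
    intro N
    rcases le_or_gt (m₀+1) N with hN | hN
    · have eIoc : ∀ x : ℕ, Icc 1 x = Ioc 0 x := by
        intro x; ext y; simp [Finset.mem_Icc, Finset.mem_Ioc]; omega
      have eIoc2 : Icc (m₀+1) N = Ioc m₀ N := by
        ext y; simp [Finset.mem_Icc, Finset.mem_Ioc]
      have hsplit : g m₀ + ∑ t ∈ Icc (m₀+1) N, qf p t = g N := by
        rw [hgdef]
        simp only
        rw [eIoc m₀, eIoc N, eIoc2]
        exact Finset.sum_Ioc_consecutive _ (Nat.zero_le m₀) (by omega)
      have hgN : g N ≤ Lsup := le_ciSup hgbdd N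
      linarith
    · have : Icc (m₀+1) N = ∅ := by
        rw [Finset.Icc_eq_empty_iff]
        omega
      rw [this]
      norm_num
  set c : ℝ := p 1 ^ m₀ * (1/2) with hcdef
  have hcpos : 0 < c := by
    have := pow_pos hp1 m₀
    rw [hcdef]; positivity
  have hzlb : ∀ N : ℕ, c ≤ zf p N := zf_lower hp hp1 m₀ hhalf
  have hbsum : ∀ N : ℕ, ∑ t ∈ Icc 1 N, bR t ≤ 1 - c := by
    intro N
    have htel : ∑ t ∈ Icc 1 N, bR t = zf p 0 - zf p N := by
      rw [hbRdef]
      have h1 : ∑ t ∈ Icc 1 N, (zf p (t - 1) - zf p t)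
          = ∑ i ∈ range N, (zf p i - zf p (i + 1)) := by
        rw [← Finset.Ico_add_one_right_eq_Icc, Finset.sum_Ico_eq_sum_range]
        refine Finset.sum_congr (by simp) fun i _ => ?_
        congr 1
        · congr 1; omega
        · congr 1; omega
      rw [h1, Finset.sum_range_sub' (zf p)]
    rw [htel, zf_zero hp]
    linarith [hzlb N]
  have hbM : ∀ N : ℕ, ∑ t ∈ Icc 1 N, ((t:ℝ)+1) ^ (r-1) * bR t ≤ M := by
    intro N
    refine le_trans (Finset.sum_le_sum fun t ht => ?_) (hMb N)
    rw [Finset.mem_Icc] at ht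
    refine mul_le_mul_of_nonneg_left (bR_le_qf hp t ht.1) ?_
    positivity
  -- the moment bound
  obtain ⟨C, hCnn, hC⟩ := moment_bound vR bR hv0 hvnn hbnn hvrec hcpos hbsum hMnn
    (Nat.ceil (r-1)) (r-1) hr0 (Nat.le_ceil _) hbM
  -- vR is antitone and vanishes
  have hU : ∀ n : ℕ, μ ({ω : Ω | nuOf ξ ω ≤ (n : ENNReal)}ᶜ) = ENNReal.ofReal (vR n) := by
    intro n
    rw [hvRdef]
    exact (ENNReal.ofReal_toReal (measure_ne_top μ _)).symm
  have hvanti : ∀ m n : ℕ, m ≤ n → vR n ≤ vR m := by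
    intro m n hmn
    refine ENNReal.toReal_mono (measure_ne_top μ _) (measure_mono ?_)
    refine Set.compl_subset_compl.2 fun ω hω => ?_
    simp only [Set.mem_setOf_eq] at *
    exact hω.trans (by exact_mod_cast Nat.cast_le.2 hmn)
  have hvle : ∀ n : ℕ, vR n ≤ C / ((n:ℝ)+1) := by
    intro n
    have hcard : ((n:ℝ)+1) * vR n ≤ ∑ m ∈ range (n+1), vR m := by
      have := Finset.card_nsmul_le_sum (range (n+1)) vR (vR n)
        (fun m hm => hvanti m n (by rw [Finset.mem_range] at hm; omega))
      rw [Finset.card_range, nsmul_eq_mul] at this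
      exact_mod_cast this
    have hsum : ∑ m ∈ range (n+1), vR m ≤ C := by
      refine le_trans (Finset.sum_le_sum fun m _ => ?_) (hC n)
      have h1 : (1:ℝ) ≤ ((m:ℝ)+1) ^ (r-1) := by
        calc (1:ℝ) = (1:ℝ) ^ (r-1) := (Real.one_rpow _).symm
          _ ≤ ((m:ℝ)+1) ^ (r-1) :=
            Real.rpow_le_rpow zero_le_one (by linarith [Nat.cast_nonneg (α := ℝ) m]) hr0
      nlinarith [hvnn m]
    rw [le_div_iff₀ (by positivity : (0:ℝ) < (n:ℝ)+1)]
    nlinarith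
  have hmutop : μ {ω : Ω | nuOf ξ ω = ⊤} = 0 := by
    have hble : ∀ n : ℕ, (μ {ω : Ω | nuOf ξ ω = ⊤}).toReal ≤ C / ((n:ℝ)+1) := by
      intro n
      refine le_trans ?_ (hvle n)
      refine ENNReal.toReal_mono (measure_ne_top μ _) (measure_mono ?_)
      intro ω hω
      simp only [Set.mem_setOf_eq, Set.mem_compl_iff] at *
      rw [hω]
      exact fun hc => (ENNReal.natCast_ne_top n) (top_le_iff.1 hc)
    have htend : Tendsto (fun n : ℕ => C / ((n:ℝ)+1)) atTop (nhds 0) := by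
      have := tendsto_const_div_atTop_nhds_zero_nat C
      have h2 := this.comp (tendsto_add_atTop_nat 1)
      have heq : (fun n : ℕ => C / ((n:ℝ)+1)) = (fun n : ℕ => C / (n:ℝ)) ∘ (fun a => a + 1) := by
        funext n
        simp only [Function.comp_apply]
        push_cast
        ring_nf
      rw [heq]
      exact h2
    have h0 : (μ {ω : Ω | nuOf ξ ω = ⊤}).toReal ≤ 0 := ge_of_tendsto' htend hble
    have h1 : (μ {ω : Ω | nuOf ξ ω = ⊤}).toReal = 0 :=
      le_antisymm h0 ENNReal.toReal_nonneg
    exact (ENNReal.toReal_eq_zero_iff _).1 h1 |>.resolve_right (measure_ne_top μ _)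
  -- the majorant
  set dm : ℕ → ENNReal := fun m => ENNReal.ofReal (((m:ℝ)+1) ^ r - (m:ℝ) ^ r) with hdmdef
  set G : Ω → ENNReal := fun ω => 1 + ∑' j : ℕ,
    Set.indicator ({ω' : Ω | nuOf ξ ω' ≤ ((j+1 : ℕ) : ENNReal)}ᶜ) (fun _ => dm (j+1)) ω
    with hGdef
  have hptwise : ∀ ω : Ω, nuOf ξ ω ≠ ⊤ → (nuOf ξ ω) ^ r ≤ G ω := by
    intro ω hωne
    have hTTne : (TT ξ ω).Nonempty := by
      by_contra hc
      exact hωne (nu_eq_top hc)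
    set nn := sInf (TT ξ ω) with hnndef
    have hnn1 : 1 ≤ nn := one_le_sInf_TT hTTne
    have hnueq : nuOf ξ ω = (nn : ENNReal) := nu_eq_coe hTTne
    have hlhs : (nuOf ξ ω) ^ r = ENNReal.ofReal ((nn:ℝ) ^ r) := by
      rw [hnueq, ← ENNReal.ofReal_natCast nn,
        ENNReal.ofReal_rpow_of_nonneg (Nat.cast_nonneg nn) (by linarith)]
    have hind : ∀ j : ℕ,
        Set.indicator ({ω' : Ω | nuOf ξ ω' ≤ ((j+1 : ℕ) : ENNReal)}ᶜ) (fun _ => dm (j+1)) ω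
          = if j + 2 ≤ nn then dm (j+1) else 0 := by
      intro j
      rw [Set.indicator_apply]
      congr 1
      simp only [Set.mem_compl_iff, Set.mem_setOf_eq, hnueq, eq_iff_iff]
      rw [Nat.cast_le]
      constructor
      · intro h; omega
      · intro h; omega
    have htsum : ∑' j : ℕ,
        Set.indicator ({ω' : Ω | nuOf ξ ω' ≤ ((j+1 : ℕ) : ENNReal)}ᶜ) (fun _ => dm (j+1)) ω
          = ∑ j ∈ range (nn - 1), dm (j+1) := by
      rw [tsum_congr hind, tsum_eq_sum (s := range (nn-1)) (fun j hj => by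
        rw [Finset.mem_range] at hj
        rw [if_neg (by omega)])]
      refine Finset.sum_congr rfl fun j hj => ?_
      rw [Finset.mem_range] at hj
      rw [if_pos (by omega)]
    have hdsum : ∑ j ∈ range (nn - 1), dm (j+1)
        = ENNReal.ofReal ((nn:ℝ) ^ r - 1) := by
      rw [hdmdef]
      simp only
      rw [← ENNReal.ofReal_sum_of_nonneg]
      · congr 1
        have : ∀ j ∈ range (nn-1), (((j+1:ℕ):ℝ)+1) ^ r - ((j+1:ℕ):ℝ) ^ r
            = (fun i : ℕ => (((i:ℕ):ℝ)+1) ^ r) (j+1) - (fun i : ℕ => (((i:ℕ):ℝ)+1) ^ r) j := by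
          intro j _
          push_cast
          ring_nf
        rw [Finset.sum_congr rfl this, Finset.sum_range_sub (fun i : ℕ => (((i:ℕ):ℝ)+1) ^ r)]
        have hc1 : (((nn-1:ℕ):ℝ)+1) = (nn:ℝ) := by
          have : (nn - 1) + 1 = nn := by omega
          exact_mod_cast congrArg (Nat.cast (R := ℝ)) this
        rw [hc1]
        norm_num
      · intro j _
        have : ((j+1:ℕ):ℝ) ≤ ((j+1:ℕ):ℝ) + 1 := by linarith
        have := Real.rpow_le_rpow (by positivity) this (by linarith : (0:ℝ) ≤ r)
        linarith
    have hnnr1 : (1:ℝ) ≤ (nn:ℝ) ^ r := by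
      calc (1:ℝ) = (1:ℝ) ^ r := (Real.one_rpow _).symm
        _ ≤ (nn:ℝ) ^ r := Real.rpow_le_rpow zero_le_one (by exact_mod_cast hnn1) (by linarith)
    rw [hGdef]
    simp only
    rw [htsum, hdsum, hlhs]
    have : ENNReal.ofReal ((nn:ℝ) ^ r) = ENNReal.ofReal 1 + ENNReal.ofReal ((nn:ℝ) ^ r - 1) := by
      rw [← ENNReal.ofReal_add zero_le_one (by linarith)]
      congr 1
      ring
    rw [this, ENNReal.ofReal_one]
  have hae : (fun ω => (nuOf ξ ω) ^ r) ≤ᵐ[μ] G := by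
    refine Filter.eventually_of_mem (show {ω : Ω | nuOf ξ ω = ⊤}ᶜ ∈ ae μ from ?_) ?_
    · rw [mem_ae_iff, compl_compl]
      exact hmutop
    · intro ω hω
      exact hptwise ω hω
  have hUmeas : ∀ j : ℕ, MeasurableSet ({ω : Ω | nuOf ξ ω ≤ ((j+1 : ℕ) : ENNReal)}ᶜ) :=
    fun j => (meas_nule hmeas (j+1)).compl
  have hGint : ∫⁻ ω, G ω ∂μ = 1 + ∑' j : ℕ, dm (j+1)
      * μ ({ω : Ω | nuOf ξ ω ≤ ((j+1 : ℕ) : ENNReal)}ᶜ) := by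
    rw [hGdef]
    simp only
    rw [lintegral_add_left measurable_const]
    rw [lintegral_one, measure_univ]
    congr 1
    rw [lintegral_tsum (fun j => (measurable_const.indicator (hUmeas j)).aemeasurable)]
    exact tsum_congr fun j => lintegral_indicator_const (hUmeas j) _
  have hterm : ∀ j : ℕ, dm (j+1) * μ ({ω : Ω | nuOf ξ ω ≤ ((j+1 : ℕ) : ENNReal)}ᶜ)
      ≤ ENNReal.ofReal (r * (((j+1:ℕ):ℝ)+1) ^ (r-1) * vR (j+1)) := by
    intro j
    rw [hU (j+1), hdmdef]
    simp only
    rw [← ENNReal.ofReal_mul (by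
      have : ((j+1:ℕ):ℝ) ≤ ((j+1:ℕ):ℝ) + 1 := by linarith
      have := Real.rpow_le_rpow (by positivity) this (by linarith : (0:ℝ) ≤ r)
      linarith)]
    refine ENNReal.ofReal_le_ofReal ?_
    have hkey := rpow_sub_rpow_le (x := ((j+1:ℕ):ℝ)+1) (y := ((j+1:ℕ):ℝ))
      (by positivity) (by linarith) hr
    have hsub : (((j+1:ℕ):ℝ)+1) - ((j+1:ℕ):ℝ) = 1 := by ring
    rw [hsub, mul_one] at hkey
    have := hvnn (j+1)
    nlinarith
  have htsum_le : ∑' j : ℕ, dm (j+1)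
      * μ ({ω : Ω | nuOf ξ ω ≤ ((j+1 : ℕ) : ENNReal)}ᶜ) ≤ ENNReal.ofReal (r * C) := by
    refine le_trans (ENNReal.tsum_le_tsum hterm) ?_
    refine ENNReal.tsum_le_of_sum_range_le fun n => ?_
    rw [← ENNReal.ofReal_sum_of_nonneg (fun j _ => by positivity)]
    refine ENNReal.ofReal_le_ofReal ?_
    have hstep : ∑ j ∈ range n, r * (((j+1:ℕ):ℝ)+1) ^ (r-1) * vR (j+1)
        = r * ∑ j ∈ range n, (((j+1:ℕ):ℝ)+1) ^ (r-1) * vR (j+1) := by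
      rw [Finset.mul_sum]
      exact Finset.sum_congr rfl fun j _ => by ring
    rw [hstep]
    refine mul_le_mul_of_nonneg_left ?_ (by linarith : (0:ℝ) ≤ r)
    have h2 : ∑ j ∈ range n, (((j+1:ℕ):ℝ)+1) ^ (r-1) * vR (j+1)
        ≤ ∑ m ∈ range (n+1), (((m:ℕ):ℝ)+1) ^ (r-1) * vR m := by
      rw [Finset.sum_range_succ' (fun m => (((m:ℕ):ℝ)+1) ^ (r-1) * vR m) n]
      have h3 : (0:ℝ) ≤ (((0:ℕ):ℝ)+1) ^ (r-1) * vR 0 := by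
        have := hvnn 0
        positivity
      push_cast
      push_cast at h3 ⊢
      linarith
    exact h2.trans (hC n)
  calc ∫⁻ ω, (nuOf ξ ω) ^ r ∂μ ≤ ∫⁻ ω, G ω ∂μ := lintegral_mono_ae hae
    _ = 1 + ∑' j : ℕ, dm (j+1) * μ ({ω : Ω | nuOf ξ ω ≤ ((j+1 : ℕ) : ENNReal)}ᶜ) := hGint
    _ ≤ 1 + ENNReal.ofReal (r * C) := by exact add_le_add_right htsum_le 1
    _ < ⊤ := by
        rw [ENNReal.add_lt_top]
        exact ⟨ENNReal.one_lt_top, ENNReal.ofReal_lt_top⟩
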